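/- arXiv:1904.03098 — 2 statements merged into one kernel-verified Lean document; each statement's English description precedes it below -/
import Mathlib

section
/- Let G be an n×n idempotent real matrix, σ_s, σ_a > 0, σ_t = σ_s + σ_a, and let q ∈ ℝⁿ. Then the solution of the linear ODE u'(t) = (σ_s G − σ_t I)u(t) + q with u(0) = u₀ is given by u(t) = e^{−σ_t t}(I + (e^{σ_s t} − 1)G)u₀ + ( (1−e^{−σ_t t})/σ_t · (I − G) + (1−e^{−σ_a t})/σ_a · G ) q. -/
open Set Matrix

theorem source_ode_solution (n : ℕ) (G : Matrix (Fin n) (Fin n) ℝ)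
    (hG : G * G = G) (σs σa σt : ℝ) (hσs : 0 < σs) (hσa : 0 < σa) (hσt : σt = σs + σa)
    (q u₀ : Fin n → ℝ) (u : ℝ → Fin n → ℝ)
    (hode : ∀ t : ℝ, HasDerivAt u
      ((σs • G - σt • (1 : Matrix (Fin n) (Fin n) ℝ)).mulVec (u t) + q) t)
    (hinit : u 0 = u₀) :
    ∀ t : ℝ, u t =
      Real.exp (-σt * t) •
        (((1 : Matrix (Fin n) (Fin n) ℝ) + (Real.exp (σs * t) - 1) • G).mulVec u₀) +
      (((1 - Real.exp (-σt * t)) / σt) • ((1 : Matrix (Fin n) (Fin n) ℝ) - G) +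
        ((1 - Real.exp (-σa * t)) / σa) • G).mulVec q := by
  have hσt0 : (0:ℝ) < σt := by rw [hσt]; positivity
  set A : Matrix (Fin n) (Fin n) ℝ := σs • G - σt • (1 : Matrix (Fin n) (Fin n) ℝ) with hA
  set a : Fin n → ℝ := u₀
  set b : Fin n → ℝ := G.mulVec u₀ with hb
  set c : Fin n → ℝ := q
  set d : Fin n → ℝ := G.mulVec q with hd
  -- the candidate solution, in expanded form
  set v : ℝ → Fin n → ℝ := fun t =>
    Real.exp (-σt * t) • a + (Real.exp (-σa * t) - Real.exp (-σt * t)) • b +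
      ((1 - Real.exp (-σt * t)) / σt) • (c - d) + ((1 - Real.exp (-σa * t)) / σa) • d with hv
  -- v agrees with the stated formula
  have hveq : ∀ t : ℝ, v t =
      Real.exp (-σt * t) •
        (((1 : Matrix (Fin n) (Fin n) ℝ) + (Real.exp (σs * t) - 1) • G).mulVec u₀) +
      (((1 - Real.exp (-σt * t)) / σt) • ((1 : Matrix (Fin n) (Fin n) ℝ) - G) +
        ((1 - Real.exp (-σa * t)) / σa) • G).mulVec q := by
    intro t
    have hexp : Real.exp (-σa * t) = Real.exp (-σt * t) * Real.exp (σs * t) := by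
      rw [← Real.exp_add]; congr 1; rw [hσt]; ring
    simp only [hv, Matrix.add_mulVec, Matrix.sub_mulVec, Matrix.one_mulVec,
      Matrix.smul_mulVec, ← hb, ← hd, hexp]
    match_scalars <;> ring
  -- action of A on the relevant vectors
  have hAa : A.mulVec a = σs • b - σt • a := by
    simp [hA, Matrix.sub_mulVec, Matrix.smul_mulVec, Matrix.one_mulVec, hb]
    rfl
  have hGb : G.mulVec b = b := by
    rw [hb, Matrix.mulVec_mulVec, hG]
  have hGd : G.mulVec d = d := by
    rw [hd, Matrix.mulVec_mulVec, hG]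
  have hAb : A.mulVec b = -σa • b := by
    simp only [hA, Matrix.sub_mulVec, Matrix.smul_mulVec, Matrix.one_mulVec, hGb]
    match_scalars; rw [hσt]; ring
  have hAc : A.mulVec c = σs • d - σt • c := by
    simp [hA, Matrix.sub_mulVec, Matrix.smul_mulVec, Matrix.one_mulVec, hd]
    rfl
  have hAd : A.mulVec d = -σa • d := by
    simp only [hA, Matrix.sub_mulVec, Matrix.smul_mulVec, Matrix.one_mulVec, hGd]
    match_scalars; rw [hσt]; ring
  -- v solves the ODE
  have hv' : ∀ t : ℝ, HasDerivAt v (A.mulVec (v t) + q) t := by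
    intro t
    have e1 : HasDerivAt (fun s : ℝ => Real.exp (-σt * s)) (-σt * Real.exp (-σt * t)) t := by
      have := (Real.hasDerivAt_exp (-σt * t)).comp t
        ((hasDerivAt_id t).const_mul (-σt))
      exact this.congr_deriv (by ring)
    have e2 : HasDerivAt (fun s : ℝ => Real.exp (-σa * s)) (-σa * Real.exp (-σa * t)) t := by
      have := (Real.hasDerivAt_exp (-σa * t)).comp t
        ((hasDerivAt_id t).const_mul (-σa))
      exact this.congr_deriv (by ring)
    have h1 : HasDerivAt (fun s => Real.exp (-σt * s) • a)
        ((-σt * Real.exp (-σt * t)) • a) t := e1.smul_const a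
    have h2 : HasDerivAt (fun s => (Real.exp (-σa * s) - Real.exp (-σt * s)) • b)
        ((-σa * Real.exp (-σa * t) - -σt * Real.exp (-σt * t)) • b) t :=
      (e2.sub e1).smul_const b
    have h3 : HasDerivAt (fun s => ((1 - Real.exp (-σt * s)) / σt) • (c - d))
        ((-(-σt * Real.exp (-σt * t)) / σt) • (c - d)) t :=
      ((e1.const_sub 1).div_const σt).smul_const (c - d)
    have h4 : HasDerivAt (fun s => ((1 - Real.exp (-σa * s)) / σa) • d)
        ((-(-σa * Real.exp (-σa * t)) / σa) • d) t :=
      ((e2.const_sub 1).div_const σa).smul_const d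
    have hsum := ((h1.add h2).add h3).add h4
    refine hsum.congr_deriv (Eq.symm ?_)
    simp only [hv, Matrix.mulVec_add, Matrix.mulVec_smul, hAa, hAb, hAc, hAd,
      Matrix.mulVec_sub]
    have hq : q = (c - d) + d := by simp; rfl
    rw [hq]
    match_scalars <;> field_simp <;> rw [hσt] <;> ring
  -- uniqueness of solutions
  have hv0 : v 0 = u 0 := by
    rw [hinit]; simp [hv]
  intro t
  rw [← hveq t]
  -- Lipschitz field
  set L : (Fin n → ℝ) →L[ℝ] (Fin n → ℝ) :=
    LinearMap.toContinuousLinearMap A.mulVecLin with hL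
  have hlip : ∀ s : ℝ, LipschitzOnWith ‖L‖₊ (fun x => A.mulVec x + q) univ := by
    intro s
    apply LipschitzWith.lipschitzOnWith
    intro x y
    have : edist (A.mulVec x + q) (A.mulVec y + q) = edist (L x) (L y) := by
      simp [edist_add_right, hL]
    rw [this]
    exact L.lipschitz x y
  have hmem : t ∈ Ioo (-(|t| + 1)) (|t| + 1) := by
    constructor
    · nlinarith [abs_nonneg t, neg_abs_le t]
    · nlinarith [abs_nonneg t, le_abs_self t]
  have h0mem : (0:ℝ) ∈ Ioo (-(|t| + 1)) (|t| + 1) := by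
    constructor <;> nlinarith [abs_nonneg t]
  have := ODE_solution_unique_of_mem_Ioo (v := fun _ x => A.mulVec x + q)
    (s := fun _ => (univ : Set (Fin n → ℝ))) (fun s _ => hlip s) h0mem
    (fun s _ => ⟨hode s, trivial⟩) (fun s _ => ⟨hv' s, trivial⟩) hv0.symm
  exact this hmem
end

section
/- Let G be an n×n idempotent matrix, σ_s, σ_a > 0, σ_t = σ_s + σ_a, and q ∈ ℝⁿ with Gq = q. Then the solution of u' = (σ_s G − σ_t I)u + q with u(0) = u₀ is u(t) = e^{−σ_a t}(e^{−σ_s t}u₀ + (1−e^{−σ_s t})Gu₀) + ((1−e^{−σ_a t})/σ_a) q. -/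
lemma ode_aux {E : Type*} [NormedAddCommGroup E] [NormedSpace ℝ E]
    (f : ℝ → E) (c : ℝ) (hc : c ≠ 0) (w : E)
    (hf : ∀ t, HasDerivAt f (c • f t + w) t) (t : ℝ) :
    f t = Real.exp (c * t) • f 0 + ((Real.exp (c * t) - 1) / c) • w := by
  set h : ℝ → E := fun s => Real.exp (-c * s) • f s + (Real.exp (-c * s) / c) • w with hh
  have he : ∀ s : ℝ, HasDerivAt (fun s => Real.exp (-c * s)) (Real.exp (-c * s) * -c) s := by
    intro s
    simpa [mul_comm] using (((hasDerivAt_id s).const_mul (-c)).exp)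
  have hderiv : ∀ s, HasDerivAt h 0 s := by
    intro s
    have h1 := (he s).smul (hf s)
    have h2 := ((he s).div_const c).smul_const w
    have h3 := h1.add h2
    convert h3 using 1
    · rfl
    have hcc : Real.exp (-c * s) * -c / c = -Real.exp (-c * s) := by
      field_simp
    rw [hcc]
    match_scalars <;> ring
  have hconst : h t = h 0 := by
    apply is_const_of_deriv_eq_zero (fun x => (hderiv x).differentiableAt)
    intro x
    exact (hderiv x).deriv
  have hexp : Real.exp (c * t) * Real.exp (-c * t) = 1 := by
    rw [← Real.exp_add]; simp
  have : Real.exp (c * t) • h t = Real.exp (c * t) • h 0 := by rw [hconst]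
  simp only [hh] at this
  rw [smul_add, smul_smul, hexp, one_smul, smul_smul] at this
  have h0 : Real.exp (-c * (0:ℝ)) = 1 := by simp
  rw [h0] at this
  have : f t = Real.exp (c * t) • f 0 + (Real.exp (c * t) * (1 / c)) • w
      - (Real.exp (c * t) * (Real.exp (-c * t) / c)) • w := by
    rw [smul_add, smul_smul] at this
    linear_combination (norm := module) this
  rw [this]
  have hc2 : Real.exp (c * t) * (Real.exp (-c * t) / c) = 1 / c := by
    rw [mul_div_assoc'] at *
    rw [hexp]
  rw [hc2]
  have hc3 : (Real.exp (c * t) - 1) / c = Real.exp (c * t) * (1/c) - 1/c := by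
    field_simp
  rw [hc3]
  module

theorem source_ode_solution_isotropic (n : ℕ) (G : Matrix (Fin n) (Fin n) ℝ)
    (hG : G * G = G) (σs σa σt : ℝ) (hσs : 0 < σs) (hσa : 0 < σa) (hσt : σt = σs + σa)
    (q u₀ : Fin n → ℝ) (hq : G.mulVec q = q) (u : ℝ → Fin n → ℝ)
    (hode : ∀ t : ℝ, HasDerivAt u
      ((σs • G - σt • (1 : Matrix (Fin n) (Fin n) ℝ)).mulVec (u t) + q) t)
    (hinit : u 0 = u₀) :
    ∀ t : ℝ, u t =
      Real.exp (-σa * t) •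
        (Real.exp (-σs * t) • u₀ + (1 - Real.exp (-σs * t)) • G.mulVec u₀) +
      ((1 - Real.exp (-σa * t)) / σa) • q := by
  intro t
  set L := LinearMap.toContinuousLinearMap (Matrix.mulVecLin G) with hL
  have hLapp : ∀ x : Fin n → ℝ, L x = G.mulVec x := by intro x; simp [hL]
  set a : ℝ → Fin n → ℝ := fun s => G.mulVec (u s) with ha_def
  have ha : ∀ s, HasDerivAt a ((-σa) • a s + q) s := by
    intro s
    have := L.hasFDerivAt.comp_hasDerivAt s (hode s)
    simp only [hLapp] at this
    have heq : G.mulVec ((σs • G - σt • (1 : Matrix (Fin n) (Fin n) ℝ)).mulVec (u s) + q)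
        = (-σa) • a s + q := by
      rw [Matrix.mulVec_add, Matrix.mulVec_mulVec, hq]
      congr 1
      have : G * (σs • G - σt • (1 : Matrix (Fin n) (Fin n) ℝ)) = (-σa) • G := by
        rw [Matrix.mul_sub, Matrix.mul_smul, Matrix.mul_smul, hG, Matrix.mul_one, hσt]
        module
      rw [this, Matrix.smul_mulVec]
    rw [heq] at this
    exact this
  set b : ℝ → Fin n → ℝ := fun s => u s - a s with hb_def
  have hb : ∀ s, HasDerivAt b ((-σt) • b s + 0) s := by
    intro s
    have := (hode s).sub (ha s)
    have heq : (σs • G - σt • (1 : Matrix (Fin n) (Fin n) ℝ)).mulVec (u s) + q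
        - ((-σa) • a s + q) = (-σt) • b s + 0 := by
      rw [Matrix.sub_mulVec, Matrix.smul_mulVec, Matrix.smul_mulVec,
        Matrix.one_mulVec]
      simp only [hb_def, ha_def, hσt, add_zero]
      module
    rw [heq] at this
    exact this
  have hA := ode_aux a (-σa) (by linarith) q ha t
  have hB := ode_aux b (-σt) (by linarith) 0 hb t
  have ha0 : a 0 = G.mulVec u₀ := by simp [ha_def, hinit]
  have hb0 : b 0 = u₀ - G.mulVec u₀ := by simp [hb_def, ha_def, hinit]
  have hu : u t = b t + a t := by simp [hb_def]
  rw [hu, hA, hB, ha0, hb0, smul_zero, add_zero]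
  have hexpt : Real.exp (-σt * t) = Real.exp (-σa * t) * Real.exp (-σs * t) := by
    rw [← Real.exp_add, hσt]; ring_nf
  rw [hexpt]
  have hdiv : (Real.exp (-σa * t) - 1) / (-σa) = (1 - Real.exp (-σa * t)) / σa := by
    rw [div_neg, ← neg_div, neg_sub]
  rw [hdiv]
  module
end
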